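/- Let d ≥ 1, γ ≥ 0, n ≥ 1. Let a : ℕ^n → ℂ with a(0) = 0, F_M(r) = ∑_{k∈ℕ^n} |a_k| r^{|k|} (|k| = k₁ + ⋯ + k_n), R_M = sup{r ≥ 0 : F_M(r) < ∞}, and F_M′(r) = ∑_{k∈ℕ^n} |a_k| |k| r^{|k|−1}. Let 0 ≤ R < R_M and let w₁, …, w_n and v₁, …, v_n be measurable functions ℝ^d → ℂ with ‖w_i‖_γ ≤ R and ‖v_i‖_γ ≤ R for each i. Then ∑_{k∈ℕ^n, k≠0} |a_k| · ‖(w₁^{*k₁} * ⋯ * w_n^{*k_n}) − (v₁^{*k₁} * ⋯ * v_n^{*k_n})‖_γ ≤ F_M′(R) · max_{1≤i≤n} ‖w_i − v_i‖_γ, where F_M′(R) < ∞. -/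

import Mathlib

open MeasureTheory
open scoped ENNReal

/-- The exponentially weighted `L¹` (Gevrey) norm `‖w‖_γ = ∫ e^{γ‖ξ‖} |w(ξ)| dξ`. -/
noncomputable def gnorm (d : ℕ) (γ : ℝ) (w : EuclideanSpace ℝ (Fin d) → ℂ) : ℝ≥0∞ :=
  ∫⁻ ξ, ENNReal.ofReal (Real.exp (γ * ‖ξ‖)) * (‖w ξ‖₊ : ℝ≥0∞)

/-- Convolution on `ℝ^d`. -/
noncomputable def convE (d : ℕ) (u v : EuclideanSpace ℝ (Fin d) → ℂ) :
    EuclideanSpace ℝ (Fin d) → ℂ :=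
  fun ξ => ∫ η, u (ξ - η) * v η

/-- Convolution of a (nonempty) list of functions; the empty convolution is set to `0`. -/
noncomputable def convList (d : ℕ) :
    List (EuclideanSpace ℝ (Fin d) → ℂ) → EuclideanSpace ℝ (Fin d) → ℂ
  | [] => fun _ => 0
  | [f] => f
  | f :: g :: rest => convE d f (convList d (g :: rest))

/-- `multiConv d n w k` is the convolution `w₁^{*k₁} * ⋯ * w_n^{*k_n}` of `k₁` copies of
`w₁`, …, `k_n` copies of `w_n`. -/
noncomputable def multiConv (d n : ℕ) (w : Fin n → EuclideanSpace ℝ (Fin d) → ℂ)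
    (k : Fin n → ℕ) : EuclideanSpace ℝ (Fin d) → ℂ :=
  convList d ((List.ofFn fun i => List.replicate (k i) (w i)).flatten)

/-- The majorizing function `F_M(r) = ∑_k |a_k| r^{|k|}`, `|k| = k₁ + ⋯ + k_n`. -/
noncomputable def FM (n : ℕ) (a : (Fin n → ℕ) → ℂ) (r : ℝ) : ℝ≥0∞ :=
  ∑' k : Fin n → ℕ, ENNReal.ofReal (‖a k‖) * ENNReal.ofReal r ^ (∑ i, k i)

/-- The radius `R_M = sup {r ≥ 0 : F_M(r) < ∞}`. -/
noncomputable def RM (n : ℕ) (a : (Fin n → ℕ) → ℂ) : ℝ≥0∞ :=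
  ⨆ r : {r : ℝ // 0 ≤ r ∧ FM n a r < ⊤}, ENNReal.ofReal r.1

/-- The derived majorizing function `F_M′(r) = ∑_k |a_k| |k| r^{|k|−1}`. -/
noncomputable def FM' (n : ℕ) (a : (Fin n → ℕ) → ℂ) (r : ℝ) : ℝ≥0∞ :=
  ∑' k : Fin n → ℕ, ENNReal.ofReal (‖a k‖) * (∑ i, k i : ℕ) *
    ENNReal.ofReal r ^ ((∑ i, k i) - 1)

namespace Stmt6Aux

variable {d : ℕ} {γ : ℝ}

/-- The weight. -/
noncomputable def wt (γ : ℝ) (ξ : EuclideanSpace ℝ (Fin d)) : ℝ≥0∞ :=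
  ENNReal.ofReal (Real.exp (γ * ‖ξ‖))

lemma wt_ne_top (ξ : EuclideanSpace ℝ (Fin d)) : wt γ ξ ≠ ⊤ := ENNReal.ofReal_ne_top

lemma one_le_wt (hγ : 0 ≤ γ) (ξ : EuclideanSpace ℝ (Fin d)) : 1 ≤ wt γ ξ := by
  rw [wt, show (1 : ℝ≥0∞) = ENNReal.ofReal 1 by simp]
  exact ENNReal.ofReal_le_ofReal (Real.one_le_exp (mul_nonneg hγ (norm_nonneg ξ)))

lemma wt_le (hγ : 0 ≤ γ) (ξ η : EuclideanSpace ℝ (Fin d)) :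
    wt γ ξ ≤ wt γ (ξ - η) * wt γ η := by
  rw [wt, wt, wt, ← ENNReal.ofReal_mul (Real.exp_nonneg _), ← Real.exp_add]
  apply ENNReal.ofReal_le_ofReal
  apply Real.exp_le_exp.2
  rw [← mul_add]
  have : ‖ξ‖ ≤ ‖ξ - η‖ + ‖η‖ := by
    calc ‖ξ‖ = ‖ξ - η + η‖ := by rw [sub_add_cancel]
    _ ≤ ‖ξ - η‖ + ‖η‖ := norm_add_le _ _
  exact mul_le_mul_of_nonneg_left this hγ

lemma measurable_wt : Measurable (wt γ (d := d)) :=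
  ENNReal.measurable_ofReal.comp (Real.measurable_exp.comp (measurable_const.mul measurable_norm))

lemma gnorm_eq (w : EuclideanSpace ℝ (Fin d) → ℂ) :
    gnorm d γ w = ∫⁻ ξ, wt γ ξ * (‖w ξ‖₊ : ℝ≥0∞) := rfl

lemma gnorm_congr_ae {f g : EuclideanSpace ℝ (Fin d) → ℂ} (h : f =ᵐ[volume] g) :
    gnorm d γ f = gnorm d γ g := by
  refine lintegral_congr_ae ?_
  filter_upwards [h] with ξ hξ
  rw [hξ]

lemma lintegral_nnnorm_le_gnorm (hγ : 0 ≤ γ) (w : EuclideanSpace ℝ (Fin d) → ℂ) :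
    ∫⁻ ξ, (‖w ξ‖₊ : ℝ≥0∞) ≤ gnorm d γ w := by
  refine lintegral_mono fun ξ => ?_
  conv_lhs => rw [← one_mul (‖w ξ‖₊ : ℝ≥0∞)]
  exact mul_le_mul_left (one_le_wt hγ ξ) _

lemma measurable_convE {u v : EuclideanSpace ℝ (Fin d) → ℂ}
    (hu : Measurable u) (hv : Measurable v) : Measurable (convE d u v) := by
  have : Measurable fun p : EuclideanSpace ℝ (Fin d) × EuclideanSpace ℝ (Fin d) =>
      u (p.1 - p.2) * v p.2 :=
    (hu.comp (measurable_fst.sub measurable_snd)).mul (hv.comp measurable_snd)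
  exact (this.stronglyMeasurable.integral_prod_right').measurable

/-- Tonelli + translation invariance. -/
lemma lintegral_lintegral_shift {F G : EuclideanSpace ℝ (Fin d) → ℝ≥0∞}
    (hF : Measurable F) (hG : Measurable G) :
    ∫⁻ ξ, ∫⁻ η, F (ξ - η) * G η = (∫⁻ ξ, F ξ) * ∫⁻ η, G η := by
  have hm : Measurable fun p : EuclideanSpace ℝ (Fin d) × EuclideanSpace ℝ (Fin d) =>
      F (p.1 - p.2) * G p.2 :=
    (hF.comp (measurable_fst.sub measurable_snd)).mul (hG.comp measurable_snd)
  rw [lintegral_lintegral_swap hm.aemeasurable]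
  have : ∀ η, ∫⁻ ξ, F (ξ - η) * G η = (∫⁻ ξ, F ξ) * G η := by
    intro η
    have hm2 : AEMeasurable (fun ξ => F (ξ - η)) volume :=
      (hF.comp (measurable_id.sub measurable_const)).aemeasurable
    rw [lintegral_mul_const'' (G η) hm2, lintegral_sub_right_eq_self F η]
  simp_rw [this]
  rw [lintegral_const_mul'' _ hG.aemeasurable]

lemma gnorm_convE_le (hγ : 0 ≤ γ) {u g : EuclideanSpace ℝ (Fin d) → ℂ}
    (hu : Measurable u) (hg : Measurable g) :
    gnorm d γ (convE d u g) ≤ gnorm d γ u * gnorm d γ g := by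
  have step1 : gnorm d γ (convE d u g) ≤
      ∫⁻ ξ, ∫⁻ η, (wt γ (ξ - η) * (‖u (ξ - η)‖₊ : ℝ≥0∞)) * (wt γ η * (‖g η‖₊ : ℝ≥0∞)) := by
    rw [gnorm_eq]
    refine lintegral_mono fun ξ => ?_
    calc wt γ ξ * (‖convE d u g ξ‖₊ : ℝ≥0∞)
        ≤ wt γ ξ * ∫⁻ η, (‖u (ξ - η) * g η‖₊ : ℝ≥0∞) :=
          mul_le_mul_right (enorm_integral_le_lintegral_enorm _) _
      _ = ∫⁻ η, wt γ ξ * (‖u (ξ - η) * g η‖₊ : ℝ≥0∞) :=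
          (lintegral_const_mul' _ _ (wt_ne_top ξ)).symm
      _ ≤ ∫⁻ η, (wt γ (ξ - η) * (‖u (ξ - η)‖₊ : ℝ≥0∞)) * (wt γ η * (‖g η‖₊ : ℝ≥0∞)) := by
          refine lintegral_mono fun η => ?_
          rw [nnnorm_mul, ENNReal.coe_mul]
          calc wt γ ξ * ((‖u (ξ - η)‖₊ : ℝ≥0∞) * (‖g η‖₊ : ℝ≥0∞))
              ≤ (wt γ (ξ - η) * wt γ η) * ((‖u (ξ - η)‖₊ : ℝ≥0∞) * (‖g η‖₊ : ℝ≥0∞)) :=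
                mul_le_mul_left (wt_le hγ ξ η) _
            _ = _ := by ring
  refine step1.trans_eq ?_
  exact lintegral_lintegral_shift (measurable_wt.mul hu.nnnorm.coe_nnreal_ennreal) (measurable_wt.mul hg.nnnorm.coe_nnreal_ennreal)

lemma gnorm_add_le {f g : EuclideanSpace ℝ (Fin d) → ℂ} (hf : Measurable f) :
    gnorm d γ (fun ξ => f ξ + g ξ) ≤ gnorm d γ f + gnorm d γ g := by
  rw [gnorm_eq, gnorm_eq, gnorm_eq, ← lintegral_add_left' (show Measurable fun ξ => wt γ ξ * (‖f ξ‖₊ : ℝ≥0∞) from measurable_wt.mul hf.nnnorm.coe_nnreal_ennreal).aemeasurable]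
  refine lintegral_mono fun ξ => ?_
  calc wt γ ξ * (‖f ξ + g ξ‖₊ : ℝ≥0∞)
      ≤ wt γ ξ * ((‖f ξ‖₊ : ℝ≥0∞) + (‖g ξ‖₊ : ℝ≥0∞)) := by
        refine mul_le_mul_right ?_ _
        rw [← ENNReal.coe_add]
        exact_mod_cast nnnorm_add_le _ _
    _ = _ := by ring

lemma measurable_convList :
    ∀ (l : List (EuclideanSpace ℝ (Fin d) → ℂ)), (∀ f ∈ l, Measurable f) →
      Measurable (convList d l)
  | [], _ => by rw [convList]; exact measurable_const
  | [f], h => by rw [convList]; exact h f (by simp)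
  | f :: g :: rest, h => by
      rw [convList]
      exact measurable_convE (h f (by simp))
        (measurable_convList (g :: rest) (fun x hx => h x (by simp [List.mem_cons] at hx ⊢; tauto)))

lemma gnorm_convList_le (hγ : 0 ≤ γ) (Re : ℝ≥0∞) :
    ∀ (l : List (EuclideanSpace ℝ (Fin d) → ℂ)), (∀ f ∈ l, Measurable f) →
      (∀ f ∈ l, gnorm d γ f ≤ Re) →
      gnorm d γ (convList d l) ≤ Re ^ l.length
  | [], _, _ => by
      rw [convList]
      simp [gnorm]
  | [f], hm, hb => by
      rw [convList]
      simpa using hb f (by simp)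
  | f :: g :: rest, hm, hb => by
      rw [convList]
      calc gnorm d γ (convE d f (convList d (g :: rest)))
          ≤ gnorm d γ f * gnorm d γ (convList d (g :: rest)) :=
            gnorm_convE_le hγ (hm f (by simp))
              (measurable_convList _ (fun x hx => hm x (by simp [List.mem_cons] at hx ⊢; tauto)))
        _ ≤ Re * Re ^ (g :: rest).length := by
            refine mul_le_mul' (hb f (by simp)) ?_
            exact gnorm_convList_le hγ Re (g :: rest)
              (fun x hx => hm x (by simp [List.mem_cons] at hx ⊢; tauto))
              (fun x hx => hb x (by simp [List.mem_cons] at hx ⊢; tauto))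
        _ = Re ^ (f :: g :: rest).length := by
            simp [pow_succ, List.length_cons]; ring

lemma ae_integrable (hγ : 0 ≤ γ) {u g : EuclideanSpace ℝ (Fin d) → ℂ}
    (hu : Measurable u) (hg : Measurable g)
    (hun : gnorm d γ u < ⊤) (hgn : gnorm d γ g < ⊤) :
    ∀ᵐ ξ, Integrable fun η => u (ξ - η) * g η := by
  set H : EuclideanSpace ℝ (Fin d) → ℝ≥0∞ :=
    fun ξ => ∫⁻ η, (‖u (ξ - η)‖₊ : ℝ≥0∞) * (‖g η‖₊ : ℝ≥0∞) with hH
  have hHm : Measurable H := by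
    apply Measurable.lintegral_prod_right'
      (f := fun p : _ × _ => (‖u (p.1 - p.2)‖₊ : ℝ≥0∞) * (‖g p.2‖₊ : ℝ≥0∞))
    exact ((hu.comp (measurable_fst.sub measurable_snd)).nnnorm.coe_nnreal_ennreal).mul (hg.comp measurable_snd).nnnorm.coe_nnreal_ennreal
  have hfin : ∫⁻ ξ, H ξ ≠ ⊤ := by
    rw [hH]
    rw [lintegral_lintegral_shift hu.nnnorm.coe_nnreal_ennreal hg.nnnorm.coe_nnreal_ennreal]
    exact (ENNReal.mul_lt_top ((lintegral_nnnorm_le_gnorm hγ u).trans_lt hun)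
      ((lintegral_nnnorm_le_gnorm hγ g).trans_lt hgn)).ne
  filter_upwards [ae_lt_top hHm hfin] with ξ hξ
  refine ⟨((hu.comp (measurable_const.sub measurable_id)).mul hg).aestronglyMeasurable, ?_⟩
  show (∫⁻ η, (‖u (ξ - η) * g η‖₊ : ℝ≥0∞)) < ⊤
  calc ∫⁻ η, (‖u (ξ - η) * g η‖₊ : ℝ≥0∞)
      = H ξ := by rw [hH]; exact lintegral_congr fun η => by rw [nnnorm_mul, ENNReal.coe_mul]
    _ < ⊤ := hξ

lemma convE_sub_decomp (hγ : 0 ≤ γ) {u u' G G' : EuclideanSpace ℝ (Fin d) → ℂ}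
    (hu : Measurable u) (hu' : Measurable u') (hG : Measurable G) (hG' : Measurable G')
    (hun : gnorm d γ u < ⊤) (hu'n : gnorm d γ u' < ⊤)
    (hGn : gnorm d γ G < ⊤) (hG'n : gnorm d γ G' < ⊤) :
    (fun ξ => convE d u G ξ - convE d u' G' ξ) =ᵐ[volume]
      fun ξ => convE d (fun x => u x - u' x) G ξ + convE d u' (fun x => G x - G' x) ξ := by
  filter_upwards [ae_integrable hγ hu hG hun hGn, ae_integrable hγ hu' hG hu'n hGn,
    ae_integrable hγ hu' hG' hu'n hG'n] with ξ h1 h2 h3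
  have h4 : Integrable (fun η => (u (ξ - η) - u' (ξ - η)) * G η) := by
    have := h1.sub h2
    refine this.congr (Filter.Eventually.of_forall fun η => ?_)
    simp only [Pi.sub_apply]; ring
  have h5 : Integrable (fun η => u' (ξ - η) * (G η - G' η)) := by
    have := h2.sub h3
    refine this.congr (Filter.Eventually.of_forall fun η => ?_)
    simp only [Pi.sub_apply]; ring
  show convE d u G ξ - convE d u' G' ξ = _
  rw [convE, convE, convE, convE]
  rw [← integral_sub h1 h3]
  rw [← integral_add h4 h5]
  refine integral_congr_ae (Filter.Eventually.of_forall fun η => ?_)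
  ring

lemma key (hγ : 0 ≤ γ) {n : ℕ} (w v : Fin n → EuclideanSpace ℝ (Fin d) → ℂ)
    (hw : ∀ i, Measurable (w i)) (hv : ∀ i, Measurable (v i))
    (Re D : ℝ≥0∞) (hRe : Re ≠ ⊤)
    (hwb : ∀ i, gnorm d γ (w i) ≤ Re) (hvb : ∀ i, gnorm d γ (v i) ≤ Re)
    (hD : ∀ i, gnorm d γ (fun ξ => w i ξ - v i ξ) ≤ D) :
    ∀ (J : List (Fin n)),
      gnorm d γ (fun ξ => convList d (J.map w) ξ - convList d (J.map v) ξ)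
        ≤ J.length * Re ^ (J.length - 1) * D
  | [] => by
      simp only [List.map_nil, convList]
      simp [gnorm]
  | [i] => by
      simp only [List.map_cons, List.map_nil, convList]
      calc gnorm d γ (fun ξ => w i ξ - v i ξ) ≤ D := hD i
        _ = ([i] : List (Fin n)).length * Re ^ (([i] : List (Fin n)).length - 1) * D := by simp
  | i :: j :: rest => by
      have hmemw : ∀ f ∈ (j :: rest).map w, Measurable f := by
        intro f hf
        simp only [List.mem_map] at hf
        obtain ⟨x, -, rfl⟩ := hf
        exact hw x
      have hmemv : ∀ f ∈ (j :: rest).map v, Measurable f := by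
        intro f hf
        simp only [List.mem_map] at hf
        obtain ⟨x, -, rfl⟩ := hf
        exact hv x
      have hmembw : ∀ f ∈ (j :: rest).map w, gnorm d γ f ≤ Re := by
        intro f hf
        simp only [List.mem_map] at hf
        obtain ⟨x, -, rfl⟩ := hf
        exact hwb x
      have hmembv : ∀ f ∈ (j :: rest).map v, gnorm d γ f ≤ Re := by
        intro f hf
        simp only [List.mem_map] at hf
        obtain ⟨x, -, rfl⟩ := hf
        exact hvb x
      have hGm : Measurable (convList d ((j :: rest).map w)) := measurable_convList _ hmemw
      have hG'm : Measurable (convList d ((j :: rest).map v)) := measurable_convList _ hmemv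
      have hGb : gnorm d γ (convList d ((j :: rest).map w)) ≤ Re ^ (rest.length + 1) := by
        simpa using gnorm_convList_le hγ Re _ hmemw hmembw
      have hG'b : gnorm d γ (convList d ((j :: rest).map v)) ≤ Re ^ (rest.length + 1) := by
        simpa using gnorm_convList_le hγ Re _ hmemv hmembv
      have hReT : Re < ⊤ := hRe.lt_top
      have hpowT : Re ^ (rest.length + 1) < ⊤ := ENNReal.pow_lt_top hReT
      have hdiff := convE_sub_decomp hγ (hw i) (hv i) hGm hG'm
        ((hwb i).trans_lt hReT) ((hvb i).trans_lt hReT)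
        (hGb.trans_lt hpowT) (hG'b.trans_lt hpowT)
      have e1 : (fun ξ => convList d ((i :: j :: rest).map w) ξ
            - convList d ((i :: j :: rest).map v) ξ)
          = fun ξ => convE d (w i) (convList d ((j :: rest).map w)) ξ
            - convE d (v i) (convList d ((j :: rest).map v)) ξ := rfl
      rw [e1, gnorm_congr_ae hdiff]
      have ih := key hγ w v hw hv Re D hRe hwb hvb hD (j :: rest)
      calc gnorm d γ (fun ξ => convE d (fun x => w i x - v i x) (convList d ((j :: rest).map w)) ξ
              + convE d (v i) (fun x => convList d ((j :: rest).map w) x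
                - convList d ((j :: rest).map v) x) ξ)
          ≤ gnorm d γ (convE d (fun x => w i x - v i x) (convList d ((j :: rest).map w)))
            + gnorm d γ (convE d (v i) (fun x => convList d ((j :: rest).map w) x
                - convList d ((j :: rest).map v) x)) :=
            gnorm_add_le (measurable_convE ((hw i).sub (hv i)) hGm)
        _ ≤ gnorm d γ (fun x => w i x - v i x) * gnorm d γ (convList d ((j :: rest).map w))
            + gnorm d γ (v i) * gnorm d γ (fun x => convList d ((j :: rest).map w) x
                - convList d ((j :: rest).map v) x) :=
            add_le_add (gnorm_convE_le hγ ((hw i).sub (hv i)) hGm)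
              (gnorm_convE_le hγ (hv i) (hGm.sub hG'm))
        _ ≤ D * Re ^ (rest.length + 1)
            + Re * (((j :: rest).length : ℝ≥0∞) * Re ^ ((j :: rest).length - 1) * D) :=
            add_le_add (mul_le_mul' (hD i) hGb) (mul_le_mul' (hvb i) ih)
        _ = ((i :: j :: rest).length : ℝ≥0∞) * Re ^ ((i :: j :: rest).length - 1) * D := by
            simp only [List.length_cons, Nat.add_sub_cancel]
            push_cast
            rw [pow_succ]
            ring

lemma map_flatten_repl {α : Type*} {n : ℕ} (k : Fin n → ℕ) (w : Fin n → α) :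
    ((List.ofFn fun i => List.replicate (k i) (w i)).flatten) =
      (((List.ofFn fun i => List.replicate (k i) i).flatten).map w) := by
  rw [List.map_flatten, List.map_ofFn]
  congr 2
  funext i
  simp [Function.comp, List.map_replicate]

lemma length_flatten_repl {n : ℕ} (k : Fin n → ℕ) :
    ((List.ofFn fun i => List.replicate (k i) i).flatten).length = ∑ i, k i := by
  simp [List.length_flatten, List.map_ofFn, Function.comp, List.sum_ofFn]

lemma real_ineq {R r : ℝ} (hR : 0 ≤ R) (hRr : R < r) (q : ℕ) :
    ((q : ℝ) + 1) * R ^ q * (r - R) ≤ r ^ (q + 1) := by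
  have h1 : ((q : ℝ) + 1) * R ^ q ≤ ∑ i ∈ Finset.range (q + 1), r ^ i * R ^ (q - i) := by
    have := Finset.card_nsmul_le_sum (Finset.range (q + 1))
        (fun i => r ^ i * R ^ (q - i)) (R ^ q) ?_
    · simpa [nsmul_eq_mul, Finset.card_range] using this
    · intro i hi
      simp only [Finset.mem_range] at hi
      have hiq : i ≤ q := Nat.lt_succ_iff.mp hi
      calc R ^ q = R ^ i * R ^ (q - i) := by rw [← pow_add]; congr 1; omega
        _ ≤ r ^ i * R ^ (q - i) :=
            mul_le_mul_of_nonneg_right (pow_le_pow_left₀ hR hRr.le i) (pow_nonneg hR _)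
  have h2 := geom_sum₂_mul r R (q + 1)
  calc ((q : ℝ) + 1) * R ^ q * (r - R)
      ≤ (∑ i ∈ Finset.range (q + 1), r ^ i * R ^ (q - i)) * (r - R) :=
        mul_le_mul_of_nonneg_right h1 (by linarith)
    _ = r ^ (q + 1) - R ^ (q + 1) := by rw [← h2]; simp
    _ ≤ r ^ (q + 1) := by nlinarith [pow_nonneg hR (q + 1)]

lemma FM'_le (n : ℕ) (a : (Fin n → ℕ) → ℂ) {R r : ℝ} (hR : 0 ≤ R) (hRr : R < r) :
    FM' n a R ≤ FM n a r * (ENNReal.ofReal (r - R))⁻¹ := by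
  rw [FM', FM, ← ENNReal.tsum_mul_right]
  refine ENNReal.tsum_le_tsum fun k => ?_
  rcases Nat.eq_zero_or_pos (∑ i, k i) with hm | hm
  · simp [hm]
  · obtain ⟨q, hq⟩ : ∃ q, ∑ i, k i = q + 1 := ⟨(∑ i, k i) - 1, by omega⟩
    rw [hq]
    have hc0 : ENNReal.ofReal (r - R) ≠ 0 := by
      simp only [ne_eq, ENNReal.ofReal_eq_zero, not_le]
      linarith
    have hcT : ENNReal.ofReal (r - R) ≠ ⊤ := ENNReal.ofReal_ne_top
    have key2 : ((q + 1 : ℕ) : ℝ≥0∞) * ENNReal.ofReal R ^ q * ENNReal.ofReal (r - R)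
        ≤ ENNReal.ofReal r ^ (q + 1) := by
      rw [← ENNReal.ofReal_pow (le_trans hR hRr.le), ← ENNReal.ofReal_pow hR,
        ← ENNReal.ofReal_natCast (q + 1), ← ENNReal.ofReal_mul (by positivity),
        ← ENNReal.ofReal_mul (by positivity)]
      refine ENNReal.ofReal_le_ofReal ?_
      push_cast
      exact real_ineq hR hRr q
    have key3 : ((q + 1 : ℕ) : ℝ≥0∞) * ENNReal.ofReal R ^ q
        ≤ ENNReal.ofReal r ^ (q + 1) * (ENNReal.ofReal (r - R))⁻¹ := by
      rw [← div_eq_mul_inv]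
      exact (ENNReal.le_div_iff_mul_le (Or.inl hc0) (Or.inl hcT)).mpr key2
    calc ENNReal.ofReal (‖a k‖) * ((q + 1 : ℕ) : ℝ≥0∞)
          * ENNReal.ofReal R ^ (q + 1 - 1)
        = ENNReal.ofReal (‖a k‖) * (((q + 1 : ℕ) : ℝ≥0∞) * ENNReal.ofReal R ^ q) := by
          rw [Nat.add_sub_cancel, mul_assoc]
      _ ≤ ENNReal.ofReal (‖a k‖)
          * (ENNReal.ofReal r ^ (q + 1) * (ENNReal.ofReal (r - R))⁻¹) :=
          mul_le_mul_right key3 _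
      _ = ENNReal.ofReal (‖a k‖) * ENNReal.ofReal r ^ (q + 1)
          * (ENNReal.ofReal (r - R))⁻¹ := by rw [mul_assoc]


end Stmt6Aux


/-- second part of Lemma 4.8: with `a(0) = 0`, `0 ≤ R < R_M` and
`‖w_i‖_γ ≤ R`, `‖v_i‖_γ ≤ R` for each `i`,
`∑_{k ≠ 0} |a_k| ‖w₁^{*k₁}*⋯*w_n^{*k_n} − v₁^{*k₁}*⋯*v_n^{*k_n}‖_γ
  ≤ F_M′(R) · max_i ‖w_i − v_i‖_γ`, with `F_M′(R) < ∞`. -/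
theorem stmt6 (d n : ℕ) (hd : 1 ≤ d) (hn : 1 ≤ n) (γ : ℝ) (hγ : 0 ≤ γ)
    (a : (Fin n → ℕ) → ℂ) (ha0 : a 0 = 0)
    (R : ℝ) (hR : 0 ≤ R) (hRM : ENNReal.ofReal R < RM n a)
    (w v : Fin n → EuclideanSpace ℝ (Fin d) → ℂ)
    (hw : ∀ i, Measurable (w i)) (hv : ∀ i, Measurable (v i))
    (hwn : ∀ i, gnorm d γ (w i) ≤ ENNReal.ofReal R)
    (hvn : ∀ i, gnorm d γ (v i) ≤ ENNReal.ofReal R) :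
    (∑' k : {k : Fin n → ℕ // k ≠ 0},
        ENNReal.ofReal (‖a k.1‖) *
          gnorm d γ (fun ξ => multiConv d n w k.1 ξ - multiConv d n v k.1 ξ))
      ≤ FM' n a R * (⨆ i : Fin n, gnorm d γ (fun ξ => w i ξ - v i ξ)) ∧
    FM' n a R < ⊤ := by
  classical
  -- extract a radius r with R < r and FM r < ⊤
  rw [RM] at hRM
  obtain ⟨⟨r, hr0, hFMr⟩, hlt⟩ := lt_iSup_iff.mp hRM
  have hRr : R < r := (ENNReal.ofReal_lt_ofReal_iff_of_nonneg hR).mp hlt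
  have hfin : FM' n a R < ⊤ := by
    refine (Stmt6Aux.FM'_le n a hR hRr).trans_lt ?_
    refine ENNReal.mul_lt_top hFMr ?_
    refine ENNReal.inv_lt_top.mpr ?_
    simp only [ENNReal.ofReal_pos]
    linarith
  refine ⟨?_, hfin⟩
  set D : ℝ≥0∞ := ⨆ i : Fin n, gnorm d γ (fun ξ => w i ξ - v i ξ) with hDdef
  have hD : ∀ i, gnorm d γ (fun ξ => w i ξ - v i ξ) ≤ D := fun i => le_iSup (fun i => gnorm d γ (fun ξ => w i ξ - v i ξ)) i
  have hterm : ∀ k : Fin n → ℕ,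
      ENNReal.ofReal (‖a k‖) *
          gnorm d γ (fun ξ => multiConv d n w k ξ - multiConv d n v k ξ)
        ≤ (ENNReal.ofReal (‖a k‖) * ((∑ i, k i : ℕ) : ℝ≥0∞) *
            ENNReal.ofReal R ^ ((∑ i, k i) - 1)) * D := by
    intro k
    set J : List (Fin n) := (List.ofFn fun i => List.replicate (k i) i).flatten with hJ
    have hmw : multiConv d n w k = convList d (J.map w) := by
      rw [multiConv, hJ]
      exact congrArg (convList d) (Stmt6Aux.map_flatten_repl k w)
    have hmv : multiConv d n v k = convList d (J.map v) := by
      rw [multiConv, hJ]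
      exact congrArg (convList d) (Stmt6Aux.map_flatten_repl k v)
    have hlen : J.length = ∑ i, k i := by
      rw [hJ]
      exact Stmt6Aux.length_flatten_repl k
    have hkey := Stmt6Aux.key hγ w v hw hv (ENNReal.ofReal R) D ENNReal.ofReal_ne_top
      hwn hvn hD J
    rw [hmw, hmv]
    calc ENNReal.ofReal (‖a k‖) *
            gnorm d γ (fun ξ => convList d (J.map w) ξ - convList d (J.map v) ξ)
        ≤ ENNReal.ofReal (‖a k‖) *
            ((J.length : ℝ≥0∞) * ENNReal.ofReal R ^ (J.length - 1) * D) :=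
          mul_le_mul_right hkey _
      _ = (ENNReal.ofReal (‖a k‖) * ((∑ i, k i : ℕ) : ℝ≥0∞) *
            ENNReal.ofReal R ^ ((∑ i, k i) - 1)) * D := by rw [hlen]; ring
  calc (∑' k : {k : Fin n → ℕ // k ≠ 0},
          ENNReal.ofReal (‖a k.1‖) *
            gnorm d γ (fun ξ => multiConv d n w k.1 ξ - multiConv d n v k.1 ξ))
      ≤ ∑' k : Fin n → ℕ,
          ENNReal.ofReal (‖a k‖) *
            gnorm d γ (fun ξ => multiConv d n w k ξ - multiConv d n v k ξ) :=
        ENNReal.tsum_comp_le_tsum_of_injective Subtype.val_injective _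
    _ ≤ ∑' k : Fin n → ℕ,
          (ENNReal.ofReal (‖a k‖) * ((∑ i, k i : ℕ) : ℝ≥0∞) *
            ENNReal.ofReal R ^ ((∑ i, k i) - 1)) * D :=
        ENNReal.tsum_le_tsum hterm
    _ = FM' n a R * D := by rw [ENNReal.tsum_mul_right, FM']
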